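/- arXiv:1404.5779 — 2 statements merged into one kernel-verified Lean document; each statement's English description precedes it below -/
import Mathlib

section
/- Let n ≥ 1 and β > 0. There exists C > 0 such that for all t > 0 and z ∈ ℝⁿ, |t^β ∂_t^β P_t(z)| ≤ C t^β / (t + |z|)^{n+β}, where ∂_t^β is the fractional derivative in the variable t applied to the Poisson kernel P_t(z) with z fixed. -/
open MeasureTheory Real Set

/-- For `β > 0`, the unique `m ∈ ℕ` with `m - 1 ≤ β < m`. -/
noncomputable def fracOrder (β : ℝ) : ℕ := ⌊β⌋.toNat + 1

/-- The `β`-th fractional derivative in `t` (à la Segovia–Wheeden):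
`∂_t^β F(t) = (e^{−iπ(m−β)}/Γ(m−β)) ∫₀^∞ ∂_t^m F(t+s) s^{m−β−1} ds` with `m - 1 ≤ β < m`. -/
noncomputable def fracDeriv (β : ℝ) (F : ℝ → ℂ) (t : ℝ) : ℂ :=
  (Complex.exp (-(Complex.I * (Real.pi : ℂ) * ((fracOrder β : ℂ) - (β : ℂ)))) /
      Complex.Gamma ((fracOrder β : ℂ) - (β : ℂ))) *
    ∫ s in Set.Ioi (0 : ℝ), iteratedDeriv (fracOrder β) F (t + s) *
      ((s ^ ((fracOrder β : ℝ) - β - 1) : ℝ) : ℂ)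

/-- The classical Poisson kernel `P_t(z) = c_n t/(|z|² + t²)^((n+1)/2)`,
`c_n = Γ((n+1)/2)/π^((n+1)/2)`. -/
noncomputable def poissonKernelRn (n : ℕ) (t : ℝ) (z : EuclideanSpace ℝ (Fin n)) : ℝ :=
  (Real.Gamma ((n + 1 : ℝ) / 2) / Real.pi ^ ((n + 1 : ℝ) / 2)) *
    (t / (‖z‖ ^ 2 + t ^ 2) ^ ((n + 1 : ℝ) / 2))

lemma lemA (σ cn : ℝ) (m : ℕ) :
    ∃ c : ℕ → ℝ, (∀ k, 2*k+1 < m ∨ m < k → c k = 0) ∧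
      ∀ a : ℝ, 0 ≤ a → ∀ t : ℝ, 0 < t →
        iteratedDeriv m (fun τ : ℝ => ((cn * (τ / (a + τ^2) ^ σ) : ℝ) : ℂ)) t
          = ((∑ k ∈ Finset.range (m+1),
              c k * t ^ (2*(k:ℤ)+1 - m) * (a + t^2) ^ (-σ - k) : ℝ) : ℂ) := by
  induction m with
  | zero =>
    refine ⟨fun k => if k = 0 then cn else 0, ?_, ?_⟩
    · rintro k (h | h) <;> simp only []
      · omega
      · rw [if_neg h.ne']
    · intro a ha t ht
      have hpos : 0 < a + t^2 := by positivity
      simp [iteratedDeriv_zero, Real.rpow_neg hpos.le, div_eq_mul_inv, mul_assoc]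
  | succ m ih =>
    obtain ⟨c, hc0, hc⟩ := ih
    refine ⟨fun k => (2*(k:ℝ)+1 - m) * c k +
        (if k = 0 then 0 else 2*(-σ - ((k:ℝ)-1)) * c (k-1)), ?_, ?_⟩
    · rintro k (h | h) <;> simp only []
      · rcases Nat.eq_zero_or_pos k with rfl | hk
        · rw [if_pos rfl, add_zero]
          rcases eq_or_lt_of_le (show 2*0+1 ≤ m by omega) with h' | h'
          · have : (2*((0:ℕ):ℝ)+1-m) = 0 := by push_cast [← h']; norm_num
            rw [this, zero_mul]
          · rw [hc0 0 (Or.inl h'), mul_zero]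
        · simp only [if_neg hk.ne', hc0 (k-1) (Or.inl (by omega)), mul_zero, add_zero]
          rcases eq_or_lt_of_le (show 2*k+1 ≤ m by omega) with h' | h'
          · have : (2*(k:ℝ)+1-m) = 0 := by
              have : (m:ℝ) = 2*(k:ℝ)+1 := by exact_mod_cast h'.symm
              rw [this]; ring
            rw [this, zero_mul]
          · rw [hc0 k (Or.inl h'), mul_zero]
      · have hk0 : k ≠ 0 := by omega
        simp only [if_neg hk0, hc0 k (Or.inr (by omega)), hc0 (k-1) (Or.inr (by omega)),
          mul_zero, add_zero]
    · intro a ha t ht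
      have hposx : ∀ x : ℝ, 0 < x → (0:ℝ) < a + x^2 := fun x hx => by positivity
      set S : ℝ → ℝ := fun x => ∑ k ∈ Finset.range (m+1),
          c k * x ^ (2*(k:ℤ)+1 - m) * (a + x^2) ^ (-σ - k) with hSdef
      have hder : HasDerivAt S
          (∑ k ∈ Finset.range (m+1),
            (c k * (((2*(k:ℤ)+1 - (m:ℤ)) : ℤ) : ℝ) * t ^ (2*(k:ℤ)+1 - m - 1) * (a + t^2) ^ (-σ - k)
             + c k * t ^ (2*(k:ℤ)+1 - m) *
                ((-σ - k) * (a + t^2) ^ (-σ - k - 1) * (2*t)))) t := by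
        refine HasDerivAt.fun_sum fun k _ => ?_
        have h1 := hasDerivAt_zpow (2*(k:ℤ)+1 - m) t (Or.inl ht.ne')
        have h2 : HasDerivAt (fun y : ℝ => (a + y^2) ^ (-σ - k))
            ((-σ - k) * (a + t^2) ^ (-σ - k - 1) * (2*t)) t := by
          have hin : HasDerivAt (fun y : ℝ => a + y^2) (2*t) t := by
            simpa [mul_comm] using ((hasDerivAt_pow 2 t).const_add a)
          have hout := Real.hasDerivAt_rpow_const (x := a + t^2) (p := -σ - k)
            (Or.inl (hposx t ht).ne')
          exact hout.comp t hin
        have h3 := (h1.fun_mul h2).const_mul (c k)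
        have hfun : (fun x : ℝ => c k * x ^ (2*(k:ℤ)+1 - (m:ℤ)) * (a + x^2) ^ (-σ - (k:ℝ)))
            = fun y : ℝ => c k * (y ^ (2*(k:ℤ)+1 - (m:ℤ)) * (a + y^2) ^ (-σ - (k:ℝ))) := by
          funext y; ring
        rw [hfun]
        refine h3.congr_deriv ?_
        ring
      have heq : iteratedDeriv (m+1) (fun τ : ℝ => ((cn * (τ / (a + τ^2) ^ σ) : ℝ) : ℂ)) t
          = deriv (fun x : ℝ => ((S x : ℝ) : ℂ)) t := by
        rw [iteratedDeriv_succ]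
        refine Filter.EventuallyEq.deriv_eq ?_
        filter_upwards [isOpen_Ioi.mem_nhds (Set.mem_Ioi.mpr ht)] with x hx
        exact hc a ha x hx
      rw [heq, (hder.ofReal_comp).deriv, Complex.ofReal_inj]
      -- now a purely real algebraic identity
      have hsplit : ∀ k : ℕ,
          ((2*(k:ℝ)+1 - m) * c k + (if k = 0 then 0 else 2*(-σ - ((k:ℝ)-1)) * c (k-1)))
              * t ^ (2*(k:ℤ)+1 - ((m+1:ℕ):ℤ)) * (a + t^2) ^ (-σ - (k:ℝ))
          = (2*(k:ℝ)+1 - m) * c k * t ^ (2*(k:ℤ)+1 - ((m+1:ℕ):ℤ)) * (a + t^2) ^ (-σ - (k:ℝ))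
            + (if k = 0 then (0:ℝ) else 2*(-σ - ((k:ℝ)-1)) * c (k-1)
                * t ^ (2*(k:ℤ)+1 - ((m+1:ℕ):ℤ)) * (a + t^2) ^ (-σ - (k:ℝ))) := by
        intro k; split_ifs with hk <;> ring
      simp only [hsplit, Finset.sum_add_distrib]
      have hC0 : c (m+1) = 0 := hc0 _ (Or.inr (by omega))
      rw [Finset.sum_range_succ (fun k => (2*(k:ℝ)+1 - m) * c k
          * t ^ (2*(k:ℤ)+1 - ((m+1:ℕ):ℤ)) * (a + t^2) ^ (-σ - (k:ℝ))) (m+1), hC0,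
        Finset.sum_range_succ' (fun k => (if k = 0 then (0:ℝ) else 2*(-σ - ((k:ℝ)-1)) * c (k-1)
          * t ^ (2*(k:ℤ)+1 - ((m+1:ℕ):ℤ)) * (a + t^2) ^ (-σ - (k:ℝ)))) (m+1)]
      simp only [reduceIte, mul_zero, zero_mul, add_zero]
      congr 1
      · refine Finset.sum_congr rfl fun k _ => ?_
        have e1 : 2*(k:ℤ)+1 - ((m+1:ℕ):ℤ) = 2*(k:ℤ)+1 - (m:ℤ) - 1 := by push_cast; ring
        rw [e1]
        push_cast
        ring
      · refine Finset.sum_congr rfl fun k _ => ?_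
        rw [if_neg (Nat.succ_ne_zero k)]
        have e1 : 2*((k+1:ℕ):ℤ)+1 - ((m+1:ℕ):ℤ) = (2*(k:ℤ)+1 - (m:ℤ)) + 1 := by push_cast; ring
        have e2 : -σ - ((k+1:ℕ):ℝ) = -σ - (k:ℝ) - 1 := by push_cast; ring
        rw [e1, e2, zpow_add_one₀ ht.ne', Nat.add_sub_cancel]
        push_cast
        ring

lemma term_bound (σ : ℝ) (hσ : 0 ≤ σ) (m k : ℕ) (hk : (m:ℝ) ≤ 2*k+1) (d r t : ℝ)
    (hr : 0 ≤ r) (ht : 0 < t) :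
    |d * t ^ (2*(k:ℤ)+1 - m) * (r^2 + t^2) ^ (-σ - k)|
      ≤ |d| * 2 ^ (σ + k) * (t + r) ^ (1 - (m:ℝ) - 2*σ) := by
  have htr : 0 < t + r := by linarith
  have hzp : t ^ (2*(k:ℤ)+1 - (m:ℤ)) = t ^ (2*(k:ℝ)+1 - m) := by
    rw [← Real.rpow_intCast t (2*(k:ℤ)+1 - m)]
    congr 1
    push_cast
    ring
  rw [hzp, abs_mul, abs_mul, abs_of_nonneg (Real.rpow_nonneg ht.le _),
    abs_of_nonneg (Real.rpow_nonneg (by positivity) _), mul_assoc, mul_assoc]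
  refine mul_le_mul_of_nonneg_left ?_ (abs_nonneg d)
  have he1 : (0:ℝ) ≤ 2*(k:ℝ)+1 - m := by linarith
  have hA : t ^ (2*(k:ℝ)+1 - m) ≤ (t + r) ^ (2*(k:ℝ)+1 - m) :=
    Real.rpow_le_rpow ht.le (by linarith) he1
  have hb1 : (t + r)^2 / 2 ≤ r^2 + t^2 := by nlinarith [sq_nonneg (t - r)]
  have hB : (r^2 + t^2) ^ (-σ - (k:ℝ)) ≤ 2 ^ (σ + (k:ℝ)) * (t + r) ^ (2*(-σ - (k:ℝ))) := by
    have h2 : (r^2 + t^2) ^ (-σ - (k:ℝ)) ≤ ((t + r)^2 / 2) ^ (-σ - (k:ℝ)) :=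
      Real.rpow_le_rpow_of_nonpos (by positivity) hb1
        (by have : (0:ℝ) ≤ (k:ℝ) := Nat.cast_nonneg k; linarith)
    refine h2.trans_eq ?_
    have h4 : (((2:ℝ) ^ (-σ - (k:ℝ)))⁻¹ : ℝ) = (2:ℝ) ^ (σ + (k:ℝ)) := by
      rw [← Real.rpow_neg (by norm_num : (0:ℝ) ≤ 2)]
      congr 1
      ring
    have h5 : (((t + r)^2 : ℝ)) ^ (-σ - (k:ℝ)) = (t + r) ^ (2*(-σ - (k:ℝ))) := by
      rw [← Real.rpow_natCast (t + r) 2, ← Real.rpow_mul htr.le]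
      norm_num
    calc ((t + r)^2 / 2) ^ (-σ - (k:ℝ))
        = ((t + r)^2) ^ (-σ - (k:ℝ)) / 2 ^ (-σ - (k:ℝ)) :=
          Real.div_rpow (by positivity) (by norm_num) _
      _ = (t + r) ^ (2*(-σ - (k:ℝ))) * ((2:ℝ) ^ (-σ - (k:ℝ)))⁻¹ := by
          rw [h5, div_eq_mul_inv]
      _ = 2 ^ (σ + (k:ℝ)) * (t + r) ^ (2*(-σ - (k:ℝ))) := by rw [h4, mul_comm]
  calc t ^ (2*(k:ℝ)+1 - m) * (r^2 + t^2) ^ (-σ - (k:ℝ))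
      ≤ (t + r) ^ (2*(k:ℝ)+1 - m) * (2 ^ (σ + (k:ℝ)) * (t + r) ^ (2*(-σ - (k:ℝ)))) := by
        exact mul_le_mul hA hB (Real.rpow_nonneg (by positivity) _) (Real.rpow_nonneg htr.le _)
    _ = 2 ^ (σ + (k:ℝ)) * (t + r) ^ (1 - (m:ℝ) - 2*σ) := by
        rw [mul_comm ((t+r) ^ (2*(k:ℝ)+1 - m)) _, mul_assoc, ← Real.rpow_add htr]
        congr 2
        ring

lemma intBound (q γ : ℝ) (hγ : -1 < γ) (hq : γ - q < -1) (hq0 : 0 ≤ q) (b : ℝ) (hb : 0 < b) :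
    IntegrableOn (fun s => (b + s) ^ (-q) * s ^ γ) (Ioi (0:ℝ)) ∧
    ∫ s in Ioi (0:ℝ), (b + s) ^ (-q) * s ^ γ
      ≤ (1/(γ+1) + 1/(-(γ-q+1))) * b ^ (γ - q + 1) := by
  set f : ℝ → ℝ := fun s => (b + s) ^ (-q) * s ^ γ with hf
  have hcont : ContinuousOn f (Ioi (0:ℝ)) := by
    refine ContinuousOn.mul ?_ ?_
    · exact ContinuousOn.rpow_const ((continuous_const.add continuous_id).continuousOn)
        (fun x hx => Or.inl (by have : (0:ℝ) < x := hx; positivity))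
    · exact ContinuousOn.rpow_const continuousOn_id (fun x hx => Or.inl (ne_of_gt hx))
  have hfnonneg : ∀ s ∈ Ioi (0:ℝ), 0 ≤ f s := fun s hs => by
    have : (0:ℝ) < s := hs
    positivity
  -- integrability and bound on Ioc 0 b
  have hg1_int : IntegrableOn (fun s => b ^ (-q) * s ^ γ) (Ioc (0:ℝ) b) :=
    ((intervalIntegral.intervalIntegrable_rpow' hγ (a := 0) (b := b)).1).const_mul _
  have hle1 : ∀ s ∈ Ioc (0:ℝ) b, f s ≤ b ^ (-q) * s ^ γ := by
    intro s hs
    refine mul_le_mul_of_nonneg_right ?_ (Real.rpow_nonneg hs.1.le γ)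
    exact Real.rpow_le_rpow_of_nonpos hb (by linarith [hs.1]) (by linarith)
  have hIoc_int : IntegrableOn f (Ioc (0:ℝ) b) := by
    refine Integrable.mono' hg1_int
      ((hcont.mono Ioc_subset_Ioi_self).aestronglyMeasurable measurableSet_Ioc) ?_
    refine ae_restrict_of_forall_mem measurableSet_Ioc fun s hs => ?_
    rw [Real.norm_eq_abs, abs_of_nonneg (hfnonneg s hs.1)]
    exact hle1 s hs
  -- integrability and bound on Ioi b
  have hg2_int : IntegrableOn (fun s => s ^ (γ - q)) (Ioi b) :=
    integrableOn_Ioi_rpow_of_lt hq hb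
  have hle2 : ∀ s ∈ Ioi b, f s ≤ s ^ (γ - q) := by
    intro s hs
    have hs0 : (0:ℝ) < s := lt_trans hb hs
    have h1 : (b + s) ^ (-q) ≤ s ^ (-q) :=
      Real.rpow_le_rpow_of_nonpos hs0 (by linarith) (by linarith)
    calc f s ≤ s ^ (-q) * s ^ γ :=
          mul_le_mul_of_nonneg_right h1 (Real.rpow_nonneg hs0.le γ)
      _ = s ^ (γ - q) := by rw [← Real.rpow_add hs0]; congr 1; ring
  have hIoi_int : IntegrableOn f (Ioi b) := by
    refine Integrable.mono' hg2_int
      ((hcont.mono (Ioi_subset_Ioi hb.le)).aestronglyMeasurable measurableSet_Ioi) ?_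
    refine ae_restrict_of_forall_mem measurableSet_Ioi fun s hs => ?_
    rw [Real.norm_eq_abs, abs_of_nonneg (hfnonneg s (lt_trans hb hs))]
    exact hle2 s hs
  have hunion : Ioc (0:ℝ) b ∪ Ioi b = Ioi (0:ℝ) := Ioc_union_Ioi_eq_Ioi hb.le
  have hint : IntegrableOn f (Ioi (0:ℝ)) := by
    rw [← hunion]; exact hIoc_int.union hIoi_int
  refine ⟨hint, ?_⟩
  have hsplit : ∫ s in Ioi (0:ℝ), f s = (∫ s in Ioc (0:ℝ) b, f s) + ∫ s in Ioi b, f s := by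
    rw [← hunion]
    exact setIntegral_union (Ioc_disjoint_Ioi le_rfl) measurableSet_Ioi hIoc_int hIoi_int
  have hI1 : ∫ s in Ioc (0:ℝ) b, f s ≤ (1/(γ+1)) * b ^ (γ - q + 1) := by
    have h1 : ∫ s in Ioc (0:ℝ) b, f s ≤ ∫ s in Ioc (0:ℝ) b, b ^ (-q) * s ^ γ :=
      setIntegral_mono_on hIoc_int hg1_int measurableSet_Ioc hle1
    refine h1.trans ?_
    rw [MeasureTheory.integral_const_mul]
    have h2 : ∫ s in Ioc (0:ℝ) b, s ^ γ = (b ^ (γ+1) - 0 ^ (γ+1)) / (γ+1) := by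
      have h2' : (∫ s in (0:ℝ)..b, s ^ γ) = (b ^ (γ+1) - 0 ^ (γ+1)) / (γ+1) :=
        _root_.integral_rpow (Or.inl hγ)
      rwa [intervalIntegral.integral_of_le hb.le] at h2'
    rw [h2, Real.zero_rpow (by intro hcon; linarith : γ + 1 ≠ 0), sub_zero]
    refine le_of_eq ?_
    rw [div_eq_mul_inv, ← mul_assoc, ← Real.rpow_add hb,
      (show -q + (γ + 1) = γ - q + 1 by ring)]
    ring
  have hI2 : ∫ s in Ioi b, f s ≤ (1/(-(γ-q+1))) * b ^ (γ - q + 1) := by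
    have h1 : ∫ s in Ioi b, f s ≤ ∫ s in Ioi b, s ^ (γ - q) :=
      setIntegral_mono_on hIoi_int hg2_int measurableSet_Ioi hle2
    refine h1.trans ?_
    rw [integral_Ioi_rpow_of_lt hq hb]
    refine le_of_eq ?_
    rw [div_eq_mul_inv, one_div, ← neg_inv]
    ring
  calc (∫ s in Ioi (0:ℝ), f s) = _ := hsplit
    _ ≤ (1/(γ+1)) * b ^ (γ - q + 1) + (1/(-(γ-q+1))) * b ^ (γ - q + 1) := add_le_add hI1 hI2
    _ = (1/(γ+1) + 1/(-(γ-q+1))) * b ^ (γ - q + 1) := by ring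

/-- `|t^β ∂_t^β P_t(z)| ≤ C t^β / (t + |z|)^{n+β}` for all `t > 0`, `z ∈ ℝⁿ`. -/
theorem statement1 (n : ℕ) (hn : 1 ≤ n) (β : ℝ) (hβ : 0 < β) :
    ∃ C > (0 : ℝ), ∀ t : ℝ, 0 < t → ∀ z : EuclideanSpace ℝ (Fin n),
      ‖(((t ^ β : ℝ) : ℂ) * fracDeriv β (fun τ => (poissonKernelRn n τ z : ℂ)) t)‖
        ≤ C * t ^ β / (t + ‖z‖) ^ ((n : ℝ) + β) := by
  have hn1 : (1:ℝ) ≤ (n:ℝ) := by exact_mod_cast hn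
  set m : ℕ := fracOrder β with hm
  have hm1 : 1 ≤ m := Nat.le_add_left 1 _
  have hβm : β < (m:ℝ) := by
    have h0 : (0:ℤ) ≤ ⌊β⌋ := Int.floor_nonneg.mpr hβ.le
    have h1 : ((⌊β⌋.toNat : ℕ):ℝ) = ((⌊β⌋:ℤ):ℝ) := by exact_mod_cast Int.toNat_of_nonneg h0
    have h2 : (m:ℝ) = ((⌊β⌋:ℤ):ℝ) + 1 := by
      rw [hm, fracOrder]; push_cast [h1]; ring
    linarith [Int.lt_floor_add_one β]
  set σ : ℝ := ((n:ℝ)+1)/2 with hσdef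
  have hσ0 : 0 ≤ σ := by rw [hσdef]; positivity
  set cn : ℝ := Real.Gamma (((n:ℝ) + 1) / 2) / Real.pi ^ (((n:ℝ) + 1) / 2) with hcndef
  obtain ⟨c, hc0, hc⟩ := lemA σ cn m
  set D : ℝ := ∑ k ∈ Finset.range (m+1), |c k| * 2 ^ (σ + (k:ℝ)) with hD
  have hD0 : 0 ≤ D := by
    rw [hD]
    refine Finset.sum_nonneg fun k _ => ?_
    positivity
  set γ : ℝ := (m:ℝ) - β - 1 with hγdef
  set q : ℝ := (n:ℝ) + (m:ℝ) with hqdef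
  have hγ1 : -1 < γ := by rw [hγdef]; linarith
  have hγq : γ - q < -1 := by rw [hγdef, hqdef]; linarith
  have hq0 : 0 ≤ q := by rw [hqdef]; positivity
  have hγ1' : 0 < γ + 1 := by linarith
  have hγq' : 0 < -(γ - q + 1) := by linarith
  set K : ℝ := 1/(γ+1) + 1/(-(γ-q+1)) with hK
  have hK0 : 0 ≤ K := by
    rw [hK]
    exact add_nonneg (by positivity) (by positivity)
  set A : ℝ := ‖
    (Complex.exp (-(Complex.I * (Real.pi : ℂ) * ((m : ℂ) - (β : ℂ)))) /
      Complex.Gamma ((m : ℂ) - (β : ℂ)))‖ with hA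
  have hA0 : 0 ≤ A := norm_nonneg _
  -- pointwise bound on the m-th derivative
  have hder_bound : ∀ r : ℝ, 0 ≤ r → ∀ τ : ℝ, 0 < τ →
      ‖iteratedDeriv m (fun x : ℝ => ((cn * (x / (r^2 + x^2) ^ σ) : ℝ):ℂ)) τ‖
        ≤ D * (τ + r) ^ (1 - (m:ℝ) - 2*σ) := by
    intro r hr τ hτ
    rw [hc (r^2) (by positivity) τ hτ, Complex.norm_real, Real.norm_eq_abs, hD,
      Finset.sum_mul]
    refine (Finset.abs_sum_le_sum_abs _ _).trans (Finset.sum_le_sum fun k _ => ?_)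
    by_cases hk : (m:ℝ) ≤ 2*(k:ℝ)+1
    · exact term_bound σ hσ0 m k hk (c k) r τ hr hτ
    · have hck : c k = 0 := hc0 k (Or.inl (by exact_mod_cast not_le.mp hk))
      rw [hck]
      simp only [zero_mul, abs_zero, mul_zero]
      positivity
  refine ⟨A * D * K + 1, by nlinarith [mul_nonneg (mul_nonneg hA0 hD0) hK0], ?_⟩
  intro t ht z
  set r : ℝ := ‖z‖ with hrdef
  have hr : 0 ≤ r := norm_nonneg z
  set b : ℝ := t + r with hbdef
  have hb0 : 0 < b := by rw [hbdef]; linarith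
  obtain ⟨hint, hIle⟩ := intBound q γ hγ1 hγq hq0 b hb0
  have hF : (fun τ : ℝ => ((poissonKernelRn n τ z : ℝ):ℂ))
      = fun x : ℝ => ((cn * (x / (r^2 + x^2) ^ σ) : ℝ):ℂ) := rfl
  rw [fracDeriv, ← hm, hF]
  rw [show ((m:ℝ) - β - 1) = γ from hγdef.symm]
  set I : ℂ := ∫ s in Set.Ioi (0:ℝ),
      iteratedDeriv m (fun x : ℝ => ((cn * (x / (r^2 + x^2) ^ σ) : ℝ):ℂ)) (t + s)
        * ((s ^ γ : ℝ):ℂ) with hI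
  have hE : γ - q + 1 = -((n:ℝ) + β) := by rw [hγdef, hqdef]; ring
  have hIbound : ‖I‖ ≤ D * (K * b ^ (γ - q + 1)) := by
    have hpt : ∀ s ∈ Set.Ioi (0:ℝ),
        ‖iteratedDeriv m (fun x : ℝ => ((cn * (x / (r^2 + x^2) ^ σ) : ℝ):ℂ)) (t + s)
          * ((s ^ γ : ℝ):ℂ)‖ ≤ D * ((b + s) ^ (-q) * s ^ γ) := by
      intro s hs
      have hs0 : (0:ℝ) < s := hs
      rw [norm_mul, Complex.norm_real, Real.norm_eq_abs,
        abs_of_nonneg (Real.rpow_nonneg hs0.le γ)]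
      have h1 := hder_bound r hr (t + s) (by linarith)
      have h2 : 1 - (m:ℝ) - 2*σ = -q := by rw [hσdef, hqdef]; ring
      have h3 : t + s + r = b + s := by rw [hbdef]; ring
      rw [h2, h3] at h1
      calc ‖iteratedDeriv m (fun x : ℝ => ((cn * (x / (r^2 + x^2) ^ σ) : ℝ):ℂ)) (t + s)‖
            * s ^ γ
          ≤ (D * (b + s) ^ (-q)) * s ^ γ :=
            mul_le_mul_of_nonneg_right h1 (Real.rpow_nonneg hs0.le γ)
        _ = D * ((b + s) ^ (-q) * s ^ γ) := by ring
    calc ‖I‖ = ‖I‖ := rfl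
      _ ≤ ∫ s in Set.Ioi (0:ℝ),
            ‖iteratedDeriv m (fun x : ℝ => ((cn * (x / (r^2 + x^2) ^ σ) : ℝ):ℂ)) (t + s)
              * ((s ^ γ : ℝ):ℂ)‖ := by rw [hI]; exact norm_integral_le_integral_norm _
      _ ≤ ∫ s in Set.Ioi (0:ℝ), D * ((b + s) ^ (-q) * s ^ γ) :=
          integral_mono_of_nonneg (Filter.Eventually.of_forall fun s => norm_nonneg _)
            (hint.const_mul D) (ae_restrict_of_forall_mem measurableSet_Ioi hpt)
      _ = D * ∫ s in Set.Ioi (0:ℝ), (b + s) ^ (-q) * s ^ γ := MeasureTheory.integral_const_mul _ _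
      _ ≤ D * (K * b ^ (γ - q + 1)) := by
          refine mul_le_mul_of_nonneg_left ?_ hD0
          rw [hK]
          exact hIle
  calc ‖(((t ^ β : ℝ) : ℂ) * ((Complex.exp (-(Complex.I * (Real.pi : ℂ)
          * ((m : ℂ) - (β : ℂ)))) / Complex.Gamma ((m : ℂ) - (β : ℂ))) * I))‖
      = t ^ β * (A * ‖I‖) := by
        rw [norm_mul, norm_mul, Complex.norm_real, Real.norm_eq_abs, abs_of_nonneg (Real.rpow_nonneg ht.le β), hA]
    _ ≤ t ^ β * (A * (D * (K * b ^ (γ - q + 1)))) := by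
        refine mul_le_mul_of_nonneg_left
          (mul_le_mul_of_nonneg_left hIbound hA0) (Real.rpow_nonneg ht.le β)
    _ = (A * D * K) * (t ^ β * ((b ^ ((n:ℝ) + β))⁻¹)) := by
        rw [hE, Real.rpow_neg hb0.le]
        ring
    _ ≤ (A * D * K + 1) * t ^ β / b ^ ((n:ℝ) + β) := by
        rw [div_eq_mul_inv, mul_assoc (A * D * K + 1)]
        exact mul_le_mul_of_nonneg_right (by linarith) (by positivity)
end

section
/- Let β > 0 and let P_t(u) = (1/π) t/(t² + u²) be the one-dimensional classical Poisson kernel. There exists C > 0 such that for all x, z ∈ (0,∞), ( ∫_{Γ₊(x)} |t^β ∂_t^β P_t(y+z)|² dy dt / t² )^{1/2} ≤ C/(x+z), and for all x, z ∈ (0,∞) with x ≠ z, ( ∫_{Γ₊(x)} |t^β ∂_t^β P_t(y−z)|² dy dt / t² )^{1/2} ≤ C/|x−z|, where ∂_t^β acts in the variable t. -/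
open MeasureTheory Real Set

/-- The one-dimensional classical Poisson kernel `P_t(u) = (1/π) t/(t²+u²)`. -/
noncomputable def poissonKernel1 (t u : ℝ) : ℝ := (1 / Real.pi) * (t / (t ^ 2 + u ^ 2))

lemma hasDerivAt_aux (c : ℂ) (k : ℤ) (τ : ℝ) (h : (τ:ℂ) + c ≠ 0) :
    HasDerivAt (fun τ : ℝ => ((τ:ℂ) + c) ^ k) ((k : ℂ) * ((τ:ℂ) + c) ^ (k - 1)) τ := by
  have h1 : HasDerivAt (fun z : ℂ => (z + c) ^ k) ((k:ℂ) * ((τ:ℂ)+c)^(k-1)) (τ:ℂ) := by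
    exact ((hasDerivAt_zpow k ((τ:ℂ)+c) (Or.inl h)).comp (τ:ℂ)
      ((hasDerivAt_id ((τ:ℂ))).add_const c)).congr_deriv (mul_one _)
  exact h1.comp_ofReal

lemma ne_aux {τ u : ℝ} (h : τ ^ 2 + u ^ 2 ≠ 0) (ε : ℝ) (hε : ε ≠ 0) :
    (τ:ℂ) + ε * (Complex.I * u) ≠ 0 := by
  intro h0
  rw [Complex.ext_iff] at h0
  simp only [Complex.add_re, Complex.ofReal_re, Complex.add_im, Complex.ofReal_im,
    Complex.mul_re, Complex.mul_im, Complex.I_re, Complex.I_im, Complex.zero_re,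
    Complex.zero_im] at h0
  have h1 : τ = 0 := by nlinarith [h0.1]
  have h2 : ε * u = 0 := by nlinarith [h0.2]
  have h3 : u = 0 := by rcases mul_eq_zero.1 h2 with h | h; exact absurd h hε; exact h
  exact h (by simp [h1, h3])

noncomputable def pkD (u : ℝ) (n : ℕ) (τ : ℝ) : ℂ :=
  (1 / (2 * (π:ℂ))) * (-1) ^ n * n.factorial *
    (((τ:ℂ) + Complex.I * u) ^ (-(n:ℤ) - 1) + ((τ:ℂ) - Complex.I * u) ^ (-(n:ℤ) - 1))

lemma hasDerivAt_pkD (u : ℝ) (n : ℕ) (τ : ℝ) (h : τ ^ 2 + u ^ 2 ≠ 0) :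
    HasDerivAt (pkD u n) (pkD u (n+1) τ) τ := by
  have h1 : (τ:ℂ) + Complex.I * u ≠ 0 := by simpa using ne_aux h 1 one_ne_zero
  have h2 : (τ:ℂ) - Complex.I * u ≠ 0 := by
    have := ne_aux h (-1) (by norm_num)
    simp only [Complex.ofReal_neg, Complex.ofReal_one] at this
    simpa [sub_eq_add_neg, neg_mul, neg_one_mul] using this
  have d1 := hasDerivAt_aux (Complex.I * u) (-(n:ℤ) - 1) τ h1
  have d2 := hasDerivAt_aux (-(Complex.I * u)) (-(n:ℤ) - 1) τ (by simpa [sub_eq_add_neg] using h2)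
  have := ((d1.add (by simpa [sub_eq_add_neg] using d2)).const_mul
    ((1 / (2 * (π:ℂ))) * (-1) ^ n * n.factorial))
  refine this.congr_deriv ?_
  simp only [pkD, Nat.factorial_succ, sub_eq_add_neg]
  push_cast
  ring_nf
open MeasureTheory Real Set

lemma iteratedDeriv_poisson (u : ℝ) (n : ℕ) :
    ∀ τ : ℝ, τ ^ 2 + u ^ 2 ≠ 0 →
      iteratedDeriv n (fun τ : ℝ => ((poissonKernel1 τ u : ℝ) : ℂ)) τ = pkD u n τ := by
  induction n with
  | zero =>
    intro τ h
    have h1 : (τ:ℂ) + Complex.I * u ≠ 0 := by simpa using ne_aux h 1 one_ne_zero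
    have h2 : (τ:ℂ) - Complex.I * u ≠ 0 := by
      have := ne_aux h (-1) (by norm_num)
      simp only [Complex.ofReal_neg, Complex.ofReal_one] at this
      simpa [sub_eq_add_neg, neg_mul, neg_one_mul] using this
    simp only [iteratedDeriv_zero, pkD, pow_zero, Nat.factorial_zero, Nat.cast_zero,
      Nat.cast_one, one_mul, mul_one]
    rw [show (-(0:ℤ) - 1) = -1 by ring]
    simp only [zpow_neg, zpow_one, poissonKernel1]
    have hπ : (π:ℂ) ≠ 0 := by exact_mod_cast Real.pi_ne_zero
    have hden : ((τ:ℂ)^2 + (u:ℂ)^2) ≠ 0 := by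
      intro h0
      apply h
      have : (((τ^2 + u^2 : ℝ)):ℂ) = 0 := by push_cast; exact h0
      exact_mod_cast this
    push_cast
    field_simp
    ring_nf
    have e1 : (τ:ℂ) + u * Complex.I ≠ 0 := by rw [mul_comm]; exact h1
    have e2 : (τ:ℂ) - u * Complex.I ≠ 0 := by rw [mul_comm]; exact h2
    field_simp
    ring_nf
    simp [Complex.I_sq]
  | succ n ih =>
    intro τ h
    rw [iteratedDeriv_succ]
    have hU : IsOpen {τ : ℝ | τ ^ 2 + u ^ 2 ≠ 0} :=
      isOpen_compl_iff.2 (isClosed_eq (by fun_prop) continuous_const) |>.mono le_rfl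
    have hev : iteratedDeriv n (fun τ : ℝ => ((poissonKernel1 τ u : ℝ) : ℂ)) =ᶠ[nhds τ] pkD u n :=
      Filter.eventually_of_mem (hU.mem_nhds h) (fun x hx => ih x hx)
    rw [hev.deriv_eq]
    exact (hasDerivAt_pkD u n τ h).deriv
lemma abs_add_I_mul (τ u : ℝ) : ‖(τ:ℂ) + Complex.I * u‖ = Real.sqrt (τ^2 + u^2) := by
  rw [Complex.norm_def, Complex.normSq_apply]
  simp [pow_two]

lemma abs_sub_I_mul (τ u : ℝ) : ‖(τ:ℂ) - Complex.I * u‖ = Real.sqrt (τ^2 + u^2) := by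
  rw [Complex.norm_def, Complex.normSq_apply]
  simp [pow_two]

lemma pkD_bound (u : ℝ) (n : ℕ) (τ : ℝ) (hτ : 0 < τ) :
    ‖pkD u n τ‖ ≤ (n.factorial * 2 ^ (n+1) / π) * (τ + |u|) ^ (-(n+1 : ℝ)) := by
  have ha : 0 < τ + |u| := by positivity
  have hr2 : (τ + |u|) / 2 ≤ Real.sqrt (τ^2 + u^2) := by
    rw [show (τ + |u|)/2 = Real.sqrt (((τ + |u|)/2)^2) from (Real.sqrt_sq (by positivity)).symm]
    apply Real.sqrt_le_sqrt
    have := abs_nonneg u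
    nlinarith [sq_abs u]
  have hrpos : 0 < Real.sqrt (τ^2 + u^2) := lt_of_lt_of_le (by positivity) hr2
  have key : ∀ c : ℂ, ‖c‖ = Real.sqrt (τ^2+u^2) →
      ‖c ^ (-(n:ℤ) - 1)‖ ≤ (2 / (τ + |u|)) ^ (n+1) := by
    intro c hc
    rw [norm_zpow, hc]
    rw [show (-(n:ℤ) - 1) = -((n+1 : ℕ) : ℤ) by push_cast; ring]
    rw [zpow_neg, zpow_natCast]
    rw [show (2 / (τ + |u|)) ^ (n+1) = ((((τ + |u|))/2) ^ (n+1))⁻¹ by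
      rw [← inv_pow]; congr 1; field_simp]
    apply inv_anti₀ (by positivity)
    exact pow_le_pow_left₀ (by positivity) hr2 _
  have h1 := key _ (abs_add_I_mul τ u)
  have h2 := key _ (abs_sub_I_mul τ u)
  calc ‖pkD u n τ‖
      ≤ (1/(2*π)) * n.factorial * (‖((τ:ℂ) + Complex.I * u) ^ (-(n:ℤ) - 1)‖
          + ‖((τ:ℂ) - Complex.I * u) ^ (-(n:ℤ) - 1)‖) := by
        have e1 : ‖1/(2*(π:ℂ))‖ = 1/(2*π) := by
          rw [norm_div, norm_one, norm_mul]
          simp [Complex.norm_real, abs_of_pos Real.pi_pos]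
        rw [pkD, norm_mul, norm_mul, norm_mul, e1]
        simp only [norm_pow, norm_neg, norm_one, one_pow, mul_one, Complex.norm_natCast]
        gcongr
        exact norm_add_le _ _
    _ ≤ (1/(2*π)) * n.factorial * ((2 / (τ + |u|)) ^ (n+1) + (2 / (τ + |u|)) ^ (n+1)) := by
        gcongr
    _ = (n.factorial * 2 ^ (n+1) / π) * (τ + |u|) ^ (-(n+1 : ℝ)) := by
        rw [show (-(n+1:ℝ)) = -((n+1 : ℕ) : ℝ) by push_cast; ring]
        rw [Real.rpow_neg ha.le, Real.rpow_natCast]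
        rw [div_pow]
        field_simp
        ring
noncomputable def D2 (b γ β : ℝ) (s : ℝ) : ℝ :=
  if s ≤ b then b ^ (-(γ + β + 2)) * s ^ γ else s ^ (-β - 2)

lemma D2_integrableOn {b γ β : ℝ} (hb : 0 < b) (hγ : -1 < γ) (hβ : 0 < β) :
    IntegrableOn (D2 b γ β) (Ioi 0) := by
  have h1 : IntegrableOn (D2 b γ β) (Ioc 0 b) := by
    apply IntegrableOn.congr_fun (f := fun s => b ^ (-(γ + β + 2)) * s ^ γ)
    · apply Integrable.const_mul
      have := (intervalIntegral.intervalIntegrable_rpow' (a := 0) (b := b) hγ)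
      rwa [intervalIntegrable_iff_integrableOn_Ioc_of_le hb.le] at this
    · intro s hs; simp [D2, hs.2]
    · exact measurableSet_Ioc
  have h2 : IntegrableOn (D2 b γ β) (Ioi b) := by
    apply IntegrableOn.congr_fun (f := fun s => s ^ (-β - 2))
    · exact integrableOn_Ioi_rpow_of_lt (by linarith) hb
    · intro s hs; simp only [D2, if_neg (not_le.2 (mem_Ioi.mp hs))]
    · exact measurableSet_Ioi
  have : Ioi (0:ℝ) = Ioc 0 b ∪ Ioi b := (Ioc_union_Ioi_eq_Ioi hb.le).symm
  rw [this]
  exact h1.union h2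

lemma D2_integral_le {b γ β : ℝ} (hb : 0 < b) (hγ : -1 < γ) (hβ : 0 < β) :
    ∫ s in Ioi (0:ℝ), D2 b γ β s ≤ (1/(γ+1) + 1/(β+1)) * b ^ (-β - 1) := by
  have h1 : IntegrableOn (D2 b γ β) (Ioc 0 b) := (D2_integrableOn hb hγ hβ).mono_set Ioc_subset_Ioi_self
  have h2 : IntegrableOn (D2 b γ β) (Ioi b) := (D2_integrableOn hb hγ hβ).mono_set (Ioi_subset_Ioi hb.le)
  have hsplit : Ioi (0:ℝ) = Ioc 0 b ∪ Ioi b := (Ioc_union_Ioi_eq_Ioi hb.le).symm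
  rw [hsplit, setIntegral_union (by simp [Set.disjoint_left]) measurableSet_Ioi h1 h2]
  have e1 : ∫ s in Ioc (0:ℝ) b, D2 b γ β s = b ^ (-(γ+β+2)) * (b ^ (γ+1) / (γ+1)) := by
    rw [setIntegral_congr_fun measurableSet_Ioc (g := fun s => b ^ (-(γ + β + 2)) * s ^ γ)
      (fun s hs => by simp [D2, hs.2])]
    rw [MeasureTheory.integral_const_mul]
    congr 1
    rw [← intervalIntegral.integral_of_le hb.le, integral_rpow (Or.inl hγ)]
    rw [Real.zero_rpow (by linarith)]
    ring
  have e2 : ∫ s in Ioi b, D2 b γ β s = b ^ (-β-1) / (β+1) := by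
    rw [setIntegral_congr_fun measurableSet_Ioi (g := fun s => s ^ (-β - 2))
      (fun s hs => by simp only [D2, if_neg (not_le.2 (mem_Ioi.mp hs))])]
    rw [integral_Ioi_rpow_of_lt (by linarith) hb]
    rw [show (-β - 2 + 1 : ℝ) = -β - 1 by ring]
    have hβ1 : (β + 1 : ℝ) ≠ 0 := by positivity
    rw [show (-β - 1:ℝ) = -(β+1) by ring, div_neg, neg_div, neg_neg]
  rw [e1, e2]
  have : b ^ (-(γ+β+2)) * (b ^ (γ+1) / (γ+1)) = b ^ (-β-1) / (γ+1) := by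
    rw [mul_div_assoc']
    congr 1
    rw [← Real.rpow_add hb]
    ring_nf
  rw [this]
  rw [add_mul]
  apply le_of_eq
  ring

lemma fracOrder_cast (β : ℝ) (hβ : 0 < β) : (fracOrder β : ℝ) = (⌊β⌋ : ℝ) + 1 := by
  rw [fracOrder]
  push_cast
  rw [show ((⌊β⌋.toNat : ℕ) : ℝ) = ((⌊β⌋.toNat : ℤ) : ℝ) by push_cast; ring,
    Int.toNat_of_nonneg (Int.floor_nonneg.2 hβ.le)]

lemma fracOrder_lt (β : ℝ) (hβ : 0 < β) : β < (fracOrder β : ℝ) := by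
  rw [fracOrder_cast β hβ]
  exact Int.lt_floor_add_one β

lemma fracOrder_le (β : ℝ) (hβ : 0 < β) : (fracOrder β : ℝ) - β ≤ 1 := by
  rw [fracOrder_cast β hβ]
  have := Int.floor_le β
  linarith

noncomputable def K1 (β : ℝ) : ℝ := (fracOrder β).factorial * 2 ^ (fracOrder β + 1) / π

noncomputable def C0 (β : ℝ) : ℝ :=
  (1 / Real.Gamma ((fracOrder β : ℝ) - β)) * K1 β *
    (1 / ((fracOrder β : ℝ) - β) + 1 / (β + 1))

lemma K1_pos (β : ℝ) : 0 < K1 β := by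
  rw [K1]; positivity

lemma C0_pos (β : ℝ) (hβ : 0 < β) : 0 < C0 β := by
  have h1 := fracOrder_lt β hβ
  have h2 : 0 < Real.Gamma ((fracOrder β : ℝ) - β) := Real.Gamma_pos_of_pos (by linarith)
  have := K1_pos β
  rw [C0]
  have h3 : 0 < 1 / ((fracOrder β : ℝ) - β) + 1 / (β + 1) := by
    have : 0 < (fracOrder β : ℝ) - β := by linarith
    positivity
  exact mul_pos (mul_pos (one_div_pos.2 h2) this) h3

lemma fracDeriv_poisson_bound (β : ℝ) (hβ : 0 < β) (u t : ℝ) (ht : 0 < t) :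
    ‖fracDeriv β (fun τ => ((poissonKernel1 τ u : ℝ) : ℂ)) t‖ ≤
      C0 β * (t + |u|) ^ (-β - 1) := by
  set m := fracOrder β with hm
  set γ := (m : ℝ) - β - 1 with hγdef
  set b := t + |u| with hbdef
  have hb : 0 < b := by positivity
  have hmβ : 0 < (m:ℝ) - β := by have := fracOrder_lt β hβ; linarith
  have hγ1 : -1 < γ := by rw [hγdef]; linarith
  have hGpos : 0 < Real.Gamma ((m:ℝ) - β) := Real.Gamma_pos_of_pos hmβ
  -- prefactor
  have h2 : ((m:ℂ) - (β:ℂ)) = (((m:ℝ) - β : ℝ) : ℂ) := by push_cast; ring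
  have epre : ‖Complex.exp (-(Complex.I * (π : ℂ) * ((m : ℂ) - (β : ℂ)))) /
      Complex.Gamma ((m : ℂ) - (β : ℂ))‖ = 1 / Real.Gamma ((m:ℝ) - β) := by
    rw [norm_div, Complex.norm_exp, h2, Complex.Gamma_ofReal, Complex.norm_real, Real.norm_eq_abs,
      abs_of_pos hGpos]
    congr 1
    have : (-(Complex.I * (π : ℂ) * ((((m:ℝ) - β : ℝ)) : ℂ))).re = 0 := by
      simp [Complex.mul_re, Complex.mul_im]
    rw [this, Real.exp_zero]
  -- pointwise bound on the integrand
  set F : ℝ → ℂ := fun τ => ((poissonKernel1 τ u : ℝ) : ℂ) with hF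
  have hpt : ∀ s ∈ Ioi (0:ℝ),
      ‖iteratedDeriv m F (t + s) * ((s ^ γ : ℝ) : ℂ)‖ ≤ K1 β * D2 b γ β s := by
    intro s hs
    have hs0 : 0 < s := hs
    have hts : 0 < t + s := by linarith
    have hne : (t + s) ^ 2 + u ^ 2 ≠ 0 := by positivity
    rw [hF, iteratedDeriv_poisson u m _ hne]
    rw [norm_mul, Complex.norm_real, Real.norm_eq_abs,
      abs_of_nonneg (Real.rpow_nonneg hs0.le γ)]
    have hbd := pkD_bound u m (t + s) hts
    have heq : t + s + |u| = b + s := by rw [hbdef]; ring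
    rw [heq] at hbd
    have hsγ : (0:ℝ) ≤ s ^ γ := Real.rpow_nonneg hs0.le γ
    calc ‖pkD u m (t+s)‖ * s ^ γ
        ≤ ((m.factorial * 2 ^ (m+1) / π) * (b + s) ^ (-(m+1 : ℝ))) * s ^ γ := by
          exact mul_le_mul_of_nonneg_right hbd hsγ
      _ = K1 β * ((b + s) ^ (-(m+1 : ℝ)) * s ^ γ) := by rw [K1]; push_cast; ring
      _ ≤ K1 β * D2 b γ β s := by
          apply mul_le_mul_of_nonneg_left _ (K1_pos β).le
          rw [D2]
          have hexp : -(m + 1 : ℝ) = -(γ + β + 2) := by rw [hγdef]; ring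
          by_cases hsb : s ≤ b
          · rw [if_pos hsb]
            apply mul_le_mul_of_nonneg_right _ hsγ
            rw [hexp]
            exact Real.rpow_le_rpow_of_nonpos hb (by linarith) (by rw [← hexp]; push_cast; linarith)
          · rw [if_neg hsb]
            push_neg at hsb
            have h1 : (b + s) ^ (-(m+1 : ℝ)) ≤ s ^ (-(m+1 : ℝ)) :=
              Real.rpow_le_rpow_of_nonpos hs0 (by linarith) (by push_cast; linarith)
            calc (b + s) ^ (-(m+1 : ℝ)) * s ^ γ ≤ s ^ (-(m+1 : ℝ)) * s ^ γ :=
                  mul_le_mul_of_nonneg_right h1 hsγ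
              _ = s ^ (-β - 2) := by
                  rw [← Real.rpow_add hs0]
                  congr 1
                  rw [hγdef]; push_cast; ring
  -- integral bound
  have hint : ∫ s in Ioi (0:ℝ), ‖iteratedDeriv m F (t + s) * ((s ^ γ : ℝ) : ℂ)‖ ≤
      K1 β * ((1/(γ+1) + 1/(β+1)) * b ^ (-β - 1)) := by
    have hD2i : Integrable (fun s => K1 β * D2 b γ β s) (volume.restrict (Ioi (0:ℝ))) :=
      (D2_integrableOn hb hγ1 hβ).const_mul _
    calc ∫ s in Ioi (0:ℝ), ‖iteratedDeriv m F (t + s) * ((s ^ γ : ℝ) : ℂ)‖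
        ≤ ∫ s in Ioi (0:ℝ), K1 β * D2 b γ β s := by
          apply integral_mono_of_nonneg
          · exact Filter.Eventually.of_forall (fun s => norm_nonneg _)
          · exact hD2i
          · exact (ae_restrict_iff' measurableSet_Ioi).2 (Filter.Eventually.of_forall hpt)
      _ = K1 β * ∫ s in Ioi (0:ℝ), D2 b γ β s := by rw [MeasureTheory.integral_const_mul]
      _ ≤ K1 β * ((1/(γ+1) + 1/(β+1)) * b ^ (-β - 1)) := by
          exact mul_le_mul_of_nonneg_left (D2_integral_le hb hγ1 hβ) (K1_pos β).le
  rw [fracDeriv, norm_mul, ← hm, epre]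
  calc 1 / Real.Gamma ((m:ℝ) - β) *
        ‖∫ s in Ioi (0:ℝ), iteratedDeriv m F (t + s) * ((s ^ γ : ℝ) : ℂ)‖
      ≤ 1 / Real.Gamma ((m:ℝ) - β) *
        (K1 β * ((1/(γ+1) + 1/(β+1)) * b ^ (-β - 1))) := by
        apply mul_le_mul_of_nonneg_left _ (by positivity)
        calc ‖∫ s in Ioi (0:ℝ), iteratedDeriv m F (t + s) * ((s ^ γ : ℝ) : ℂ)‖
            = ‖∫ s in Ioi (0:ℝ), iteratedDeriv m F (t + s) * ((s ^ γ : ℝ) : ℂ)‖ := rfl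
          _ ≤ ∫ s in Ioi (0:ℝ), ‖iteratedDeriv m F (t + s) * ((s ^ γ : ℝ) : ℂ)‖ :=
              norm_integral_le_integral_norm _
          _ ≤ _ := hint
    _ = C0 β * b ^ (-β - 1) := by
        rw [C0, hγdef]
        have : (m:ℝ) - β - 1 + 1 = (m:ℝ) - β := by ring
        rw [this]
        ring

lemma cone_bound (β x a : ℝ) (hβ : 0 < β) (hx : 0 < x) (ha : 0 < a) (w : ℝ → ℝ)
    (hw : ∀ y t : ℝ, 0 < y → 0 < t → |x - y| < t → a ≤ t + |w y|) :
    Real.sqrt (∫ t in Set.Ioi (0 : ℝ), ∫ y in Set.Ioi (0 : ℝ),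
        (if |x - y| < t then
            ‖((t ^ β : ℝ) : ℂ) *
                fracDeriv β (fun τ => ((poissonKernel1 τ (w y) : ℝ) : ℂ)) t‖ ^ 2 / t ^ 2
          else 0))
      ≤ (C0 β * Real.sqrt (1/β + 1)) / a := by
  have hC0 := C0_pos β hβ
  set h : ℝ → ℝ := fun t => C0 β ^ 2 * (t ^ (2*β - 2) * (max a t) ^ (-2*β - 2)) with hh
  have hhnn : ∀ t, 0 < t → 0 ≤ h t := by
    intro t ht
    have hmax : 0 < max a t := lt_max_of_lt_right ht
    rw [hh]
    positivity
  -- pointwise inner bound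
  have hval : ∀ t y : ℝ, 0 < t → 0 < y →
      (if |x - y| < t then
          ‖((t ^ β : ℝ) : ℂ) *
              fracDeriv β (fun τ => ((poissonKernel1 τ (w y) : ℝ) : ℂ)) t‖ ^ 2 / t ^ 2
        else 0) ≤ (Ioo (x - t) (x + t)).indicator (fun _ => h t) y := by
    intro t y ht hy
    by_cases hc : |x - y| < t
    · rw [if_pos hc]
      have hmem : y ∈ Ioo (x - t) (x + t) := by
        rcases abs_sub_lt_iff.1 hc with ⟨h1, h2⟩
        exact ⟨by linarith, by linarith⟩
      rw [indicator_of_mem hmem]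
      have hmax : 0 < max a t := lt_max_of_lt_right ht
      have hfd : ‖fracDeriv β (fun τ => ((poissonKernel1 τ (w y) : ℝ) : ℂ)) t‖ ≤
          C0 β * (max a t) ^ (-β - 1) := by
        refine le_trans (fracDeriv_poisson_bound β hβ (w y) t ht) ?_
        apply mul_le_mul_of_nonneg_left _ hC0.le
        apply Real.rpow_le_rpow_of_nonpos hmax _ (by linarith)
        exact max_le (hw y t hy ht hc) (by linarith [abs_nonneg (w y)])
      rw [norm_mul]
      have habs : ‖((t ^ β : ℝ) : ℂ)‖ = t ^ β := by
        rw [Complex.norm_real, Real.norm_eq_abs, abs_of_nonneg (Real.rpow_nonneg ht.le β)]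
      rw [habs]
      have key : (t ^ β * (C0 β * (max a t) ^ (-β - 1))) ^ 2 / t ^ 2 = h t := by
        have e1 : (t ^ β) ^ 2 = t ^ (2*β) := by
          rw [← Real.rpow_natCast (t ^ β) 2, ← Real.rpow_mul ht.le]
          norm_num
          ring_nf
        have e2 : ((max a t) ^ (-β-1 : ℝ)) ^ 2 = (max a t) ^ (-2*β - 2) := by
          rw [← Real.rpow_natCast ((max a t) ^ (-β-1:ℝ)) 2, ← Real.rpow_mul hmax.le]
          norm_num
          ring_nf
        have e3 : t ^ (2*β) / t ^ (2:ℕ) = t ^ (2*β - 2) := by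
          rw [← Real.rpow_natCast t 2, ← Real.rpow_sub ht]
          norm_num
        rw [hh, mul_pow, mul_pow, e1, e2]
        rw [show t ^ (2*β) * (C0 β ^ 2 * (max a t) ^ (-2*β-2)) / t ^ 2
            = (t ^ (2*β) / t ^ (2:ℕ)) * (C0 β ^ 2 * (max a t) ^ (-2*β-2)) by ring]
        rw [e3]
        ring
      rw [← key]
      gcongr
    · rw [if_neg hc]
      exact indicator_nonneg (fun _ _ => hhnn t ht) y
  -- inner integral bound
  have hinner : ∀ t : ℝ, 0 < t →
      (∫ y in Ioi (0:ℝ), (if |x - y| < t then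
          ‖((t ^ β : ℝ) : ℂ) *
              fracDeriv β (fun τ => ((poissonKernel1 τ (w y) : ℝ) : ℂ)) t‖ ^ 2 / t ^ 2
        else 0)) ≤ 2 * C0 β ^ 2 * D2 a (2*β-1) 1 t := by
    intro t ht
    have hItg : Integrable ((Ioo (x-t) (x+t)).indicator (fun _ => h t))
        (volume.restrict (Ioi (0:ℝ))) := by
      apply Integrable.restrict
      exact (integrableOn_const measure_Ioo_lt_top.ne).integrable_indicator
        measurableSet_Ioo
    calc (∫ y in Ioi (0:ℝ), (if |x - y| < t then
            ‖((t ^ β : ℝ) : ℂ) *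
                fracDeriv β (fun τ => ((poissonKernel1 τ (w y) : ℝ) : ℂ)) t‖ ^ 2 / t ^ 2
          else 0))
        ≤ ∫ y in Ioi (0:ℝ), (Ioo (x-t) (x+t)).indicator (fun _ => h t) y := by
          apply integral_mono_of_nonneg
          · apply Filter.Eventually.of_forall
            intro y
            simp only [Pi.zero_apply]
            split_ifs with hc
            · positivity
            · exact le_rfl
          · exact hItg
          · exact (ae_restrict_iff' measurableSet_Ioi).2
              (Filter.Eventually.of_forall (fun y hy => hval t y ht hy))
      _ = (volume (Ioo (x-t) (x+t) ∩ Ioi 0)).toReal * h t := by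
          rw [integral_indicator measurableSet_Ioo, Measure.restrict_restrict measurableSet_Ioo,
            setIntegral_const, smul_eq_mul]
          rfl
      _ ≤ (2*t) * h t := by
          apply mul_le_mul_of_nonneg_right _ (hhnn t ht)
          have h1 : volume (Ioo (x-t) (x+t) ∩ Ioi 0) ≤ ENNReal.ofReal (2*t) := by
            refine le_trans (measure_mono inter_subset_left) ?_
            rw [Real.volume_Ioo]
            apply le_of_eq
            congr 1
            ring
          calc (volume (Ioo (x-t) (x+t) ∩ Ioi 0)).toReal
              ≤ (ENNReal.ofReal (2*t)).toReal := ENNReal.toReal_mono ENNReal.ofReal_ne_top h1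
            _ = 2*t := ENNReal.toReal_ofReal (by linarith)
      _ = 2 * C0 β ^ 2 * D2 a (2*β-1) 1 t := by
          rw [hh, D2]
          simp only []
          by_cases hta : t ≤ a
          · rw [if_pos hta, max_eq_left hta]
            rw [show (-(2*β-1+1+2) : ℝ) = -2*β-2 by ring]
            rw [show (2*β-1:ℝ) = (2*β-2)+1 by ring, Real.rpow_add_one (ne_of_gt ht)]
            ring
          · rw [if_neg hta, max_eq_right (le_of_lt (not_le.1 hta))]
            rw [show (2*t) * (C0 β ^ 2 * (t ^ (2*β-2) * t ^ (-2*β-2)))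
                = 2 * C0 β ^ 2 * (t ^ (2*β-2) * t ^ (-2*β-2) * t) by ring]
            rw [← Real.rpow_add ht, show (2*β-2 + (-2*β-2) : ℝ) = -4 by ring]
            rw [show (-1-2 : ℝ) = (-4)+1 by norm_num, Real.rpow_add_one (ne_of_gt ht)]
  -- outer integral
  have hDi : Integrable (fun t => 2 * C0 β ^ 2 * D2 a (2*β-1) 1 t)
      (volume.restrict (Ioi (0:ℝ))) :=
    (D2_integrableOn ha (by linarith) one_pos).const_mul _
  have houter : (∫ t in Set.Ioi (0 : ℝ), ∫ y in Set.Ioi (0 : ℝ),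
        (if |x - y| < t then
            ‖((t ^ β : ℝ) : ℂ) *
                fracDeriv β (fun τ => ((poissonKernel1 τ (w y) : ℝ) : ℂ)) t‖ ^ 2 / t ^ 2
          else 0))
      ≤ 2 * C0 β ^ 2 * ((1/((2*β-1)+1) + 1/(1+1)) * a ^ (-(1:ℝ) - 1)) := by
    calc (∫ t in Set.Ioi (0 : ℝ), ∫ y in Set.Ioi (0 : ℝ),
          (if |x - y| < t then
              ‖((t ^ β : ℝ) : ℂ) *
                  fracDeriv β (fun τ => ((poissonKernel1 τ (w y) : ℝ) : ℂ)) t‖ ^ 2 / t ^ 2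
            else 0))
        ≤ ∫ t in Set.Ioi (0:ℝ), 2 * C0 β ^ 2 * D2 a (2*β-1) 1 t := by
          apply integral_mono_of_nonneg
          · apply Filter.Eventually.of_forall
            intro t
            simp only [Pi.zero_apply]
            apply integral_nonneg
            intro y
            simp only [Pi.zero_apply]
            split_ifs with hc
            · positivity
            · exact le_rfl
          · exact hDi
          · exact (ae_restrict_iff' measurableSet_Ioi).2
              (Filter.Eventually.of_forall (fun t ht => hinner t ht))
      _ = 2 * C0 β ^ 2 * ∫ t in Set.Ioi (0:ℝ), D2 a (2*β-1) 1 t :=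
          MeasureTheory.integral_const_mul _ _
      _ ≤ 2 * C0 β ^ 2 * ((1/((2*β-1)+1) + 1/(1+1)) * a ^ (-(1:ℝ) - 1)) := by
          apply mul_le_mul_of_nonneg_left _ (by positivity)
          exact D2_integral_le ha (by linarith) one_pos
  set B := C0 β * Real.sqrt (1/β + 1) with hB
  have hsq : 0 < (1/β + 1 : ℝ) := by positivity
  have hBpos : 0 < B := mul_pos hC0 (Real.sqrt_pos.2 hsq)
  have hfin : (∫ t in Set.Ioi (0 : ℝ), ∫ y in Set.Ioi (0 : ℝ),
        (if |x - y| < t then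
            ‖((t ^ β : ℝ) : ℂ) *
                fracDeriv β (fun τ => ((poissonKernel1 τ (w y) : ℝ) : ℂ)) t‖ ^ 2 / t ^ 2
          else 0)) ≤ (B / a) ^ 2 := by
    refine le_trans houter (le_of_eq ?_)
    have ea : a ^ (-(1:ℝ) - 1) = (a ^ 2)⁻¹ := by
      rw [show (-(1:ℝ) - 1) = -((2:ℕ):ℝ) by norm_num, Real.rpow_neg ha.le, Real.rpow_natCast]
    rw [ea, div_pow, hB, mul_pow, Real.sq_sqrt hsq.le]
    rw [show (2*β-1+1 : ℝ) = 2*β by ring]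
    field_simp
    ring
  calc Real.sqrt (∫ t in Set.Ioi (0 : ℝ), ∫ y in Set.Ioi (0 : ℝ),
        (if |x - y| < t then
            ‖((t ^ β : ℝ) : ℂ) *
                fracDeriv β (fun τ => ((poissonKernel1 τ (w y) : ℝ) : ℂ)) t‖ ^ 2 / t ^ 2
          else 0))
      ≤ Real.sqrt ((B / a) ^ 2) := Real.sqrt_le_sqrt hfin
    _ = B / a := Real.sqrt_sq (by positivity)

/-- cone-square estimates for the translated/reflected 1D Poisson kernel:
`‖t^β ∂_t^β P_t(y+z)‖_{L²(Γ₊(x), dy dt/t²)} ≤ C/(x+z)` and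
`‖t^β ∂_t^β P_t(y−z)‖_{L²(Γ₊(x), dy dt/t²)} ≤ C/|x−z|`. -/
theorem statement14 (β : ℝ) (hβ : 0 < β) :
    ∃ C > (0 : ℝ),
      (∀ x z : ℝ, 0 < x → 0 < z →
        Real.sqrt (∫ t in Set.Ioi (0 : ℝ), ∫ y in Set.Ioi (0 : ℝ),
            (if |x - y| < t then
                ‖((t ^ β : ℝ) : ℂ) *
                    fracDeriv β (fun τ => (poissonKernel1 τ (y + z) : ℂ)) t‖ ^ 2 / t ^ 2
              else 0))
          ≤ C / (x + z)) ∧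
      (∀ x z : ℝ, 0 < x → 0 < z → x ≠ z →
        Real.sqrt (∫ t in Set.Ioi (0 : ℝ), ∫ y in Set.Ioi (0 : ℝ),
            (if |x - y| < t then
                ‖((t ^ β : ℝ) : ℂ) *
                    fracDeriv β (fun τ => (poissonKernel1 τ (y - z) : ℂ)) t‖ ^ 2 / t ^ 2
              else 0))
          ≤ C / |x - z|) := by
  refine ⟨C0 β * Real.sqrt (1/β + 1),
    mul_pos (C0_pos β hβ) (Real.sqrt_pos.2 (by positivity)), ?_, ?_⟩
  · intro x z hx hz
    refine cone_bound β x (x + z) hβ hx (by positivity) (fun y => y + z) ?_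
    intro y t hy ht hc
    rw [abs_of_nonneg (by linarith : (0:ℝ) ≤ y + z)]
    have h1 := (abs_sub_lt_iff.1 hc).1
    linarith
  · intro x z hx hz hne
    have ha : 0 < |x - z| := abs_pos.2 (sub_ne_zero.2 hne)
    refine cone_bound β x |x - z| hβ hx ha (fun y => y - z) ?_
    intro y t hy ht hc
    have h1 : |x - z| ≤ |x - y| + |y - z| := abs_sub_le x y z
    linarith
end
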